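/- Let F ≥ 4 and m ≥ 1 be integers. Then the maximum K for which a (K, F, F−2, mF+F−1)-PDA exists equals (m·F·(F−1) + (F−1)·(F−2))/2; i.e., K_{(F,2,mF+F−1)} = m·K_{(F,2,F)} + K_{(F−1,2,F−1)}. -/

import Mathlib

/-- A `(K, F, Z, S)` placement delivery array: an `F × K` array over
`{0, …, S-1} ∪ {*}` (with `none` playing the role of `*`) such that
(1) each integer occurs at most once in each row and in each column,
(2) whenever two distinct cells `(a, b)` and `(c, d)` contain the same
integer, the opposite corners `(a, d)` and `(c, b)` contain `*`, and
(3) the symbol `*` occurs exactly `Z` times in each column. -/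
def IsPDA (K F Z S : ℕ) (P : Fin F → Fin K → Option (Fin S)) : Prop :=
  (∀ (i : Fin F) (j j' : Fin K) (s : Fin S), P i j = some s → P i j' = some s → j = j') ∧
  (∀ (i i' : Fin F) (j : Fin K) (s : Fin S), P i j = some s → P i' j = some s → i = i') ∧
  (∀ (a c : Fin F) (b d : Fin K) (s : Fin S),
      (a, b) ≠ (c, d) → P a b = some s → P c d = some s →
      P a d = none ∧ P c b = none) ∧
  (∀ j : Fin K, (Finset.univ.filter (fun i => P i j = none)).card = Z)

/-- There exists a `(K, F, Z, S)` placement delivery array. -/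
def PDAExists (K F Z S : ℕ) : Prop :=
  ∃ P : Fin F → Fin K → Option (Fin S), IsPDA K F Z S P

open Finset

lemma pdaExists_of {F Z : ℕ} {ι σ : Type} [Fintype ι] [Fintype σ] [DecidableEq ι] [DecidableEq σ]
    (P : Fin F → ι → Option σ)
    (h1 : ∀ (i : Fin F) (j j' : ι) (s : σ), P i j = some s → P i j' = some s → j = j')
    (h2 : ∀ (i i' : Fin F) (j : ι) (s : σ), P i j = some s → P i' j = some s → i = i')
    (h3 : ∀ (a c : Fin F) (b d : ι) (s : σ),
      (a, b) ≠ (c, d) → P a b = some s → P c d = some s → P a d = none ∧ P c b = none)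
    (h4 : ∀ j : ι, (Finset.univ.filter (fun i => P i j = none)).card = Z) :
    PDAExists (Fintype.card ι) F Z (Fintype.card σ) := by
  classical
  obtain ⟨e⟩ : Nonempty (ι ≃ Fin (Fintype.card ι)) := ⟨Fintype.equivFin ι⟩
  obtain ⟨f⟩ : Nonempty (σ ≃ Fin (Fintype.card σ)) := ⟨Fintype.equivFin σ⟩
  refine ⟨fun i j => (P i (e.symm j)).map f, ?_, ?_, ?_, ?_⟩
  · intro i j j' s hj hj'
    have : ∀ j s, (P i (e.symm j)).map f = some s → P i (e.symm j) = some (f.symm s) := by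
      intro j s h
      rcases Option.map_eq_some_iff.mp h with ⟨a, ha, rfl⟩
      simp [ha]
    have := h1 i (e.symm j) (e.symm j') (f.symm s) (this j s hj) (this j' s hj')
    exact e.symm.injective this
  · intro i i' j s hj hj'
    have g : ∀ i s, (P i (e.symm j)).map f = some s → P i (e.symm j) = some (f.symm s) := by
      intro i s h
      rcases Option.map_eq_some_iff.mp h with ⟨a, ha, rfl⟩
      simp [ha]
    exact h2 i i' (e.symm j) (f.symm s) (g i s hj) (g i' s hj')
  · intro a c b d s hne hab hcd
    have g : ∀ i j s, (P i (e.symm j)).map f = some s → P i (e.symm j) = some (f.symm s) := by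
      intro i j s h
      rcases Option.map_eq_some_iff.mp h with ⟨x, hx, rfl⟩
      simp [hx]
    have hne' : (a, e.symm b) ≠ (c, e.symm d) := by
      intro h
      apply hne
      have h1 := congrArg Prod.fst h
      have h2 := congrArg Prod.snd h
      simp at h1 h2
      simp [h1, h2]
    have := h3 a c (e.symm b) (e.symm d) (f.symm s) hne' (g a b s hab) (g c d s hcd)
    constructor
    · simp [this.1]
    · simp [this.2]
  · intro j
    rw [← h4 (e.symm j)]
    apply Finset.card_bij (fun i _ => i) <;> simp [Option.map_eq_none_iff]

lemma pda_base (n : ℕ) : PDAExists (n.choose 2) n (n - 2) n := by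
  classical
  have hcardι : Fintype.card {c : Finset (Fin n) // c.card = 2} = n.choose 2 := by
    rw [Fintype.card_finset_len]; simp
  have hcardσ : Fintype.card (Fin n) = n := by simp
  set ι := {c : Finset (Fin n) // c.card = 2} with hι
  have hne : ∀ (i : Fin n) (c : ι), i ∈ c.1 → ((c.1.erase i)).Nonempty := by
    intro i c hi
    rw [← Finset.card_pos, Finset.card_erase_of_mem hi, c.2]
    norm_num
  set P : Fin n → ι → Option (Fin n) := fun i c =>
    if h : i ∈ c.1 then some ((c.1.erase i).min' (hne i c h)) else none with hP
  have key : ∀ (i : Fin n) (c : ι) (s : Fin n), P i c = some s →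
      i ∈ c.1 ∧ s ≠ i ∧ c.1 = {i, s} := by
    intro i c s h
    rw [hP] at h
    simp only at h
    split at h
    case isFalse => exact absurd h (by simp)
    case isTrue hi =>
      have hs : s ∈ c.1.erase i := by
        rw [← Option.some_inj.mp h]; exact Finset.min'_mem _ _
      have hsne : s ≠ i := Finset.ne_of_mem_erase hs
      have hsub : ({i, s} : Finset (Fin n)) ⊆ c.1 := by
        intro x hx
        simp only [Finset.mem_insert, Finset.mem_singleton] at hx
        rcases hx with rfl | rfl
        · exact hi
        · exact Finset.mem_of_mem_erase hs
      have hcard : ({i, s} : Finset (Fin n)).card = 2 := by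
        rw [Finset.card_insert_of_notMem (by simp [hsne.symm]), Finset.card_singleton]
      exact ⟨hi, hsne, (Finset.eq_of_subset_of_card_le hsub (by rw [c.2, hcard])).symm⟩
  have H : PDAExists (Fintype.card ι) n (n - 2) (Fintype.card (Fin n)) := by
    apply pdaExists_of P
    · intro i j j' s hj hj'
      obtain ⟨_, _, h⟩ := key i j s hj
      obtain ⟨_, _, h'⟩ := key i j' s hj'
      exact Subtype.ext (h.trans h'.symm)
    · intro i i' j s hj hj'
      obtain ⟨_, hsi, h⟩ := key i j s hj
      obtain ⟨hi', hsi', h'⟩ := key i' j s hj'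
      rw [h] at hi'
      simp only [Finset.mem_insert, Finset.mem_singleton] at hi'
      rcases hi' with h | h
      · exact h.symm
      · exact absurd h hsi'.symm
    · intro a c b d s hnepair hab hcd
      obtain ⟨_, hsa, hb⟩ := key a b s hab
      obtain ⟨_, hsc, hd⟩ := key c d s hcd
      have hac : a ≠ c := by
        intro h
        subst h
        exact hnepair (by rw [Subtype.ext (hb.trans hd.symm)])
      constructor
      · rw [hP]; simp only [dif_neg]; rw [dif_neg]
        rw [hd]; simp [hac, hsa.symm]
      · rw [hP]; simp only [dif_neg]; rw [dif_neg]
        rw [hb]; simp [hac.symm, hsc.symm]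
    · intro c
      have heq : (Finset.univ.filter (fun i => P i c = none)) = Finset.univ \ c.1 := by
        ext i
        simp only [Finset.mem_filter, Finset.mem_univ, true_and, Finset.mem_sdiff, hP]
        constructor
        · intro h hi
          rw [dif_pos hi] at h
          exact absurd h (by simp)
        · intro h
          rw [dif_neg h]
      rw [heq, Finset.card_sdiff_of_subset (Finset.subset_univ _), c.2]
      simp
  rwa [hcardι, hcardσ] at H

lemma pda_pad {K F Z S : ℕ} (h : PDAExists K F Z S) : PDAExists K (F + 1) (Z + 1) S := by
  classical
  obtain ⟨P, hP1, hP2, hP3, hP4⟩ := h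
  set P' : Fin (F + 1) → Fin K → Option (Fin S) := fun i j =>
    if h : (i : ℕ) < F then P ⟨i, h⟩ j else none with hP'
  have key : ∀ (i : Fin (F + 1)) (j : Fin K) (s : Fin S), P' i j = some s →
      ∃ h : (i : ℕ) < F, P ⟨i, h⟩ j = some s := by
    intro i j s h
    rw [hP'] at h
    simp only at h
    split at h
    case isTrue hlt => exact ⟨hlt, h⟩
    case isFalse => exact absurd h (by simp)
  refine ⟨P', ?_, ?_, ?_, ?_⟩
  · intro i j j' s hj hj'
    obtain ⟨hi, h1⟩ := key i j s hj
    obtain ⟨hi', h2⟩ := key i j' s hj'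
    exact hP1 ⟨i, hi⟩ j j' s h1 h2
  · intro i i' j s hj hj'
    obtain ⟨hi, h1⟩ := key i j s hj
    obtain ⟨hi', h2⟩ := key i' j s hj'
    have := hP2 ⟨i, hi⟩ ⟨i', hi'⟩ j s h1 h2
    have hv : (i : ℕ) = (i' : ℕ) := by injection this
    exact Fin.ext hv
  · intro a c b d s hne hab hcd
    obtain ⟨ha, h1⟩ := key a b s hab
    obtain ⟨hc, h2⟩ := key c d s hcd
    have hne' : ((⟨a, ha⟩ : Fin F), b) ≠ (⟨c, hc⟩, d) := by
      intro h
      apply hne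
      have e1 := congrArg Prod.fst h
      have e2 := congrArg Prod.snd h
      simp only at e1 e2
      have : (a : ℕ) = c := (congrArg Fin.val e1 : ((⟨a, ha⟩ : Fin F) : ℕ) = ((⟨c, hc⟩ : Fin F) : ℕ))
      exact Prod.ext (Fin.ext this) e2
    obtain ⟨c1, c2⟩ := hP3 ⟨a, ha⟩ ⟨c, hc⟩ b d s hne' h1 h2
    constructor
    · rw [hP']; simp only; rw [dif_pos ha]; exact c1
    · rw [hP']; simp only; rw [dif_pos hc]; exact c2
  · intro j
    have hsum : ∀ (g : Fin (F + 1) → ℕ), ∑ i, g i = ∑ i : Fin F, g i.castSucc + g (Fin.last F) :=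
      fun g => Fin.sum_univ_castSucc g
    rw [Finset.card_filter]
    rw [hsum]
    have h1 : ∀ i : Fin F, (if P' i.castSucc j = none then 1 else 0) =
        (if P i j = none then 1 else 0) := by
      intro i
      congr 1
      rw [hP']
      simp only [Fin.coe_castSucc]
      rw [dif_pos i.isLt]
    have h2 : P' (Fin.last F) j = none := by
      rw [hP']; simp
    rw [h2]
    simp only [h1, if_pos rfl]
    rw [← Finset.card_filter, hP4 j]
    norm_num

lemma pda_concat {K1 K2 F Z S1 S2 : ℕ} (h1 : PDAExists K1 F Z S1) (h2 : PDAExists K2 F Z S2) :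
    PDAExists (K1 + K2) F Z (S1 + S2) := by
  classical
  obtain ⟨P, hP1, hP2, hP3, hP4⟩ := h1
  obtain ⟨Q, hQ1, hQ2, hQ3, hQ4⟩ := h2
  have hι : Fintype.card (Fin K1 ⊕ Fin K2) = K1 + K2 := by simp
  have hσ : Fintype.card (Fin S1 ⊕ Fin S2) = S1 + S2 := by simp
  rw [← hι, ← hσ]
  set R : Fin F → (Fin K1 ⊕ Fin K2) → Option (Fin S1 ⊕ Fin S2) := fun i j =>
    Sum.elim (fun j1 => (P i j1).map Sum.inl) (fun j2 => (Q i j2).map Sum.inr) j with hR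
  have keyL : ∀ (i : Fin F) (j1 : Fin K1) (s : Fin S1 ⊕ Fin S2),
      R i (Sum.inl j1) = some s → ∃ s1, s = Sum.inl s1 ∧ P i j1 = some s1 := by
    intro i j1 s h
    rw [hR] at h
    simp only [Sum.elim_inl] at h
    rcases Option.map_eq_some_iff.mp h with ⟨s1, hs1, rfl⟩
    exact ⟨s1, rfl, hs1⟩
  have keyR : ∀ (i : Fin F) (j2 : Fin K2) (s : Fin S1 ⊕ Fin S2),
      R i (Sum.inr j2) = some s → ∃ s2, s = Sum.inr s2 ∧ Q i j2 = some s2 := by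
    intro i j2 s h
    rw [hR] at h
    simp only [Sum.elim_inr] at h
    rcases Option.map_eq_some_iff.mp h with ⟨s2, hs2, rfl⟩
    exact ⟨s2, rfl, hs2⟩
  apply pdaExists_of R
  · intro i j j' s hj hj'
    rcases j with j1 | j2 <;> rcases j' with j1' | j2'
    · obtain ⟨s1, rfl, hp⟩ := keyL i j1 s hj
      obtain ⟨s1', he, hp'⟩ := keyL i j1' _ hj'
      rw [Sum.inl.injEq] at he
      subst he
      rw [hP1 i j1 j1' s1 hp hp']
    · obtain ⟨s1, rfl, _⟩ := keyL i j1 s hj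
      obtain ⟨s2, he, _⟩ := keyR i j2' _ hj'
      exact absurd he (by simp)
    · obtain ⟨s2, rfl, _⟩ := keyR i j2 s hj
      obtain ⟨s1, he, _⟩ := keyL i j1' _ hj'
      exact absurd he (by simp)
    · obtain ⟨s2, rfl, hq⟩ := keyR i j2 s hj
      obtain ⟨s2', he, hq'⟩ := keyR i j2' _ hj'
      rw [Sum.inr.injEq] at he
      subst he
      rw [hQ1 i j2 j2' s2 hq hq']
  · intro i i' j s hj hj'
    rcases j with j1 | j2
    · obtain ⟨s1, rfl, hp⟩ := keyL i j1 s hj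
      obtain ⟨s1', he, hp'⟩ := keyL i' j1 _ hj'
      rw [Sum.inl.injEq] at he
      subst he
      exact hP2 i i' j1 s1 hp hp'
    · obtain ⟨s2, rfl, hq⟩ := keyR i j2 s hj
      obtain ⟨s2', he, hq'⟩ := keyR i' j2 _ hj'
      rw [Sum.inr.injEq] at he
      subst he
      exact hQ2 i i' j2 s2 hq hq'
  · intro a c b d s hne hab hcd
    rcases b with b1 | b2 <;> rcases d with d1 | d2
    · obtain ⟨s1, rfl, hp⟩ := keyL a b1 s hab
      obtain ⟨s1', he, hp'⟩ := keyL c d1 _ hcd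
      rw [Sum.inl.injEq] at he
      subst he
      have hne' : (a, b1) ≠ (c, d1) := by
        intro h
        exact hne (by rw [Prod.ext_iff] at h ⊢; exact ⟨h.1, by simp only at h; rw [h.2]⟩)
      obtain ⟨e1, e2⟩ := hP3 a c b1 d1 s1 hne' hp hp'
      constructor
      · rw [hR]; simp [e1]
      · rw [hR]; simp [e2]
    · obtain ⟨s1, rfl, _⟩ := keyL a b1 s hab
      obtain ⟨s2, he, _⟩ := keyR c d2 _ hcd
      exact absurd he (by simp)
    · obtain ⟨s2, rfl, _⟩ := keyR a b2 s hab
      obtain ⟨s1, he, _⟩ := keyL c d1 _ hcd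
      exact absurd he (by simp)
    · obtain ⟨s2, rfl, hq⟩ := keyR a b2 s hab
      obtain ⟨s2', he, hq'⟩ := keyR c d2 _ hcd
      rw [Sum.inr.injEq] at he
      subst he
      have hne' : (a, b2) ≠ (c, d2) := by
        intro h
        exact hne (by rw [Prod.ext_iff] at h ⊢; exact ⟨h.1, by simp only at h; rw [h.2]⟩)
      obtain ⟨e1, e2⟩ := hQ3 a c b2 d2 s2 hne' hq hq'
      constructor
      · rw [hR]; simp [e1]
      · rw [hR]; simp [e2]
  · intro j
    rcases j with j1 | j2
    · rw [← hP4 j1]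
      apply Finset.card_bij (fun i _ => i) <;> simp [hR, Option.map_eq_none_iff]
    · rw [← hQ4 j2]
      apply Finset.card_bij (fun i _ => i) <;> simp [hR, Option.map_eq_none_iff]

lemma two_mul_choose_two (n : ℕ) : 2 * n.choose 2 = n * (n - 1) := by
  rw [Nat.choose_two_right]
  have he : 2 ∣ n * (n - 1) := by
    rcases Nat.even_or_odd n with h | h
    · exact Dvd.dvd.mul_right h.two_dvd _
    · rcases n with _ | k
      · simp
      · have hk : Even k := Nat.not_odd_iff_even.mp (Nat.odd_add_one.mp h)
        have : k + 1 - 1 = k := rfl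
        rw [this]
        exact Dvd.dvd.mul_left hk.two_dvd _
  exact Nat.mul_div_cancel' he

lemma pda_exists_main (F m : ℕ) (hF : 4 ≤ F) :
    PDAExists (m * F.choose 2 + (F - 1).choose 2) F (F - 2) (m * F + (F - 1)) := by
  induction m with
  | zero =>
    have h := pda_pad (pda_base (F - 1))
    have e1 : F - 1 + 1 = F := by omega
    have e2 : F - 1 - 2 + 1 = F - 2 := by omega
    rw [e1, e2] at h
    simpa using h
  | succ k ih =>
    have h := pda_concat (pda_base F) ih
    have e1 : F.choose 2 + (k * F.choose 2 + (F - 1).choose 2)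
        = (k + 1) * F.choose 2 + (F - 1).choose 2 := by ring
    have e2 : F + (k * F + (F - 1)) = (k + 1) * F + (F - 1) := by ring
    rw [e1, e2] at h
    exact h

section Upper

variable {K F S : ℕ} (P : Fin F → Fin K → Option (Fin S))

/-- number of occurrences of symbol `s` in row `x` (0 or 1). -/
def pdaOut (s : Fin S) (x : Fin F) : ℕ := (univ.filter fun j => P x j = some s).card

open scoped Classical in
/-- number of columns containing `s` whose *other* filled cell is in row `x`. -/
noncomputable def pdaInn (s : Fin S) (x : Fin F) : ℕ :=
  (univ.filter fun j => (∃ y, P y j = some s) ∧ P x j ≠ none ∧ P x j ≠ some s).card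

/-- the column-structure hypothesis: every column has exactly two filled cells. -/
def ColS : Prop := ∀ j : Fin K, ∃ a b : Fin F, a ≠ b ∧ P a j ≠ none ∧ P b j ≠ none ∧
      (∀ y : Fin F, P y j ≠ none → y = a ∨ y = b)

variable {P}

lemma colS_of (hF : 2 ≤ F)
    (hP4 : ∀ j : Fin K, (Finset.univ.filter (fun i => P i j = none)).card = F - 2) :
    ColS P := by
  intro j
  have h := Finset.card_filter_add_card_filter_not
    (s := (univ : Finset (Fin F))) (p := fun i => P i j = none)
  rw [hP4 j, Finset.card_univ, Fintype.card_fin] at h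
  have h2 : (univ.filter fun i => ¬ (P i j = none)).card = 2 := by omega
  obtain ⟨a, b, hab, hset⟩ := Finset.card_eq_two.mp h2
  have hmem : ∀ y : Fin F, P y j ≠ none ↔ (y = a ∨ y = b) := by
    intro y
    constructor
    · intro hy
      have : y ∈ univ.filter fun i => ¬ (P i j = none) := by simp [hy]
      rw [hset] at this
      simpa using this
    · intro hy
      have : y ∈ ({a, b} : Finset (Fin F)) := by simpa using hy
      rw [← hset] at this
      simpa using (Finset.mem_filter.mp this).2
  exact ⟨a, b, hab, (hmem a).mpr (Or.inl rfl), (hmem b).mpr (Or.inr rfl),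
    fun y hy => (hmem y).mp hy⟩

lemma pdaOut_le_one
    (hP1 : ∀ (i : Fin F) (j j' : Fin K) (s : Fin S), P i j = some s → P i j' = some s → j = j')
    (s : Fin S) (x : Fin F) : pdaOut P s x ≤ 1 := by
  apply Finset.card_le_one.mpr
  intro j hj j' hj'
  simp only [Finset.mem_filter] at hj hj'
  exact (hP1 x j j' s hj.2 hj'.2).symm ▸ hP1 x j j' s hj.2 hj'.2

lemma pdaOut_eq_zero
    (hP3 : ∀ (a c : Fin F) (b d : Fin K) (s : Fin S),
      (a, b) ≠ (c, d) → P a b = some s → P c d = some s → P a d = none ∧ P c b = none)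
    {s : Fin S} {x : Fin F} (h : 1 ≤ pdaInn P s x) : pdaOut P s x = 0 := by
  classical
  rw [pdaInn] at h
  obtain ⟨j, hj⟩ := Finset.card_pos.mp h
  simp only [Finset.mem_filter] at hj
  obtain ⟨-, ⟨y, hy⟩, hfill, hne⟩ := hj
  rw [pdaOut, Finset.card_eq_zero]
  rw [Finset.filter_eq_empty_iff]
  intro j' _
  intro hxj'
  have hyx : y ≠ x := by
    intro h; rw [h] at hy; exact hne hy
  have hpair : ((y, j) : Fin F × Fin K) ≠ (x, j') := by
    intro h
    exact hyx (congrArg Prod.fst h)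
  have := hP3 y x j j' s hpair hy hxj'
  exact hfill this.2

/-- row balance: in each row, total out-degree equals total in-degree. -/
lemma sum_out_row (x : Fin F) :
    ∑ s, pdaOut P s x = (univ.filter fun j => P x j ≠ none).card := by
  classical
  simp only [pdaOut, Finset.card_filter]
  rw [Finset.sum_comm]
  apply Finset.sum_congr rfl
  intro j _
  cases hv : P x j with
  | none => simp [hv]
  | some t =>
    have : ∀ s : Fin S, (some t = some s) ↔ (t = s) := by simp
    simp only [hv, Option.some_inj]
    rw [Finset.sum_ite_eq univ t (fun _ => 1)]
    simp

lemma sum_inn_row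
    (hP2 : ∀ (i i' : Fin F) (j : Fin K) (s : Fin S), P i j = some s → P i' j = some s → i = i')
    (hcs : ColS P) (x : Fin F) :
    ∑ s, pdaInn P s x = (univ.filter fun j => P x j ≠ none).card := by
  classical
  simp only [pdaInn, Finset.card_filter]
  rw [Finset.sum_comm]
  apply Finset.sum_congr rfl
  intro j _
  cases hv : P x j with
  | none => simp [hv]
  | some t =>
    have hxfill : P x j ≠ none := by simp [hv]
    obtain ⟨a, b, hab, ha, hb, huniq⟩ := hcs j
    -- the other filled row
    have hxab := huniq x hxfill
    obtain ⟨o, ho, hox⟩ : ∃ o : Fin F, P o j ≠ none ∧ o ≠ x := by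
      rcases hxab with rfl | rfl
      · exact ⟨b, hb, fun h => hab h.symm⟩
      · exact ⟨a, ha, hab⟩
    obtain ⟨u, hu⟩ := Option.ne_none_iff_exists'.mp ho
    have hut : u ≠ t := by
      intro h
      rw [h] at hu
      exact hox (hP2 o x j t hu hv)
    have key : ∀ s : Fin S,
        ((∃ y, P y j = some s) ∧ (some t : Option (Fin S)) ≠ none
          ∧ (some t : Option (Fin S)) ≠ some s) ↔ s = u := by
      intro s
      constructor
      · rintro ⟨⟨y, hy⟩, -, hts⟩
        have hxs : P x j ≠ some s := by rw [hv]; exact hts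
        have hyx : y ≠ x := fun h => hxs (h ▸ hy)
        have hyo : y = o := by
          rcases huniq y (by simp [hy]) with hy2 | hy2 <;> rcases huniq o ho with ho2 | ho2
          · rw [hy2, ho2]
          · exfalso
            rcases hxab with hx2 | hx2
            · exact hyx (by rw [hy2, hx2])
            · exact hox (by rw [ho2, hx2])
          · exfalso
            rcases hxab with hx2 | hx2
            · exact hox (by rw [ho2, hx2])
            · exact hyx (by rw [hy2, hx2])
          · rw [hy2, ho2]
        rw [hyo] at hy
        have : some s = some u := by rw [← hy, hu]
        exact Option.some_inj.mp this
      · rintro rfl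
        exact ⟨⟨o, hu⟩, by simp, by simp [hut.symm]⟩
    have hcong : ∀ s : Fin S,
        (if (∃ y, P y j = some s) ∧ (some t : Option (Fin S)) ≠ none
            ∧ (some t : Option (Fin S)) ≠ some s then 1 else 0)
          = (if s = u then 1 else 0) := by
      intro s
      by_cases h : s = u
      · rw [if_pos ((key s).mpr h), if_pos h]
      · rw [if_neg (fun hc => h ((key s).mp hc)), if_neg h]
    rw [Finset.sum_congr rfl (fun s _ => hcong s)]
    rw [Finset.sum_ite_eq' univ u (fun _ => 1)]
    simp

/-- column balance: for each symbol, total out-degree equals total in-degree. -/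
lemma sum_out_col
    (hP2 : ∀ (i i' : Fin F) (j : Fin K) (s : Fin S), P i j = some s → P i' j = some s → i = i')
    (hcs : ColS P) (s : Fin S) :
    ∑ x, pdaOut P s x = ∑ x, pdaInn P s x := by
  classical
  simp only [pdaOut, pdaInn, Finset.card_filter]
  rw [Finset.sum_comm, Finset.sum_comm (s := univ) (t := univ)
    (f := fun x j => if (∃ y, P y j = some s) ∧ P x j ≠ none ∧ P x j ≠ some s then 1 else 0)]
  apply Finset.sum_congr rfl
  intro j _
  by_cases hex : ∃ y, P y j = some s
  · obtain ⟨y, hy⟩ := hex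
    have h1 : (∑ x, if P x j = some s then 1 else 0) = 1 := by
      have : ∀ x : Fin F, (P x j = some s) ↔ x = y := by
        intro x
        exact ⟨fun h => hP2 x y j s h hy, fun h => h ▸ hy⟩
      have e : ∀ x : Fin F, (if P x j = some s then 1 else 0) = if x = y then (1:ℕ) else 0 := by
        intro x
        by_cases h : x = y
        · rw [if_pos ((this x).mpr h), if_pos h]
        · rw [if_neg (fun hc => h ((this x).mp hc)), if_neg h]
      rw [Finset.sum_congr rfl (fun x _ => e x)]
      rw [Finset.sum_ite_eq' univ y (fun _ => 1)]
      simp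
    obtain ⟨a, b, hab, ha, hb, huniq⟩ := hcs j
    have hyfill : P y j ≠ none := by simp [hy]
    obtain ⟨o, ho, hoy⟩ : ∃ o : Fin F, P o j ≠ none ∧ o ≠ y := by
      rcases huniq y hyfill with rfl | rfl
      · exact ⟨b, hb, fun h => hab h.symm⟩
      · exact ⟨a, ha, hab⟩
    have hos : P o j ≠ some s := by
      intro h
      exact hoy (hP2 o y j s h hy)
    have key : ∀ x : Fin F,
        ((∃ y, P y j = some s) ∧ P x j ≠ none ∧ P x j ≠ some s) ↔ x = o := by
      intro x
      constructor
      · rintro ⟨-, hxfill, hxs⟩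
        have hxy : x ≠ y := fun h => hxs (h ▸ hy)
        rcases huniq x hxfill with hx2 | hx2 <;> rcases huniq o ho with ho2 | ho2
        · rw [hx2, ho2]
        · exfalso
          rcases huniq y hyfill with hy2 | hy2
          · exact hxy (by rw [hx2, hy2])
          · exact hoy (by rw [ho2, hy2])
        · exfalso
          rcases huniq y hyfill with hy2 | hy2
          · exact hoy (by rw [ho2, hy2])
          · exact hxy (by rw [hx2, hy2])
        · rw [hx2, ho2]
      · rintro rfl
        exact ⟨⟨y, hy⟩, ho, hos⟩
    have h2 : (∑ x, if (∃ y, P y j = some s) ∧ P x j ≠ none ∧ P x j ≠ some s then 1 else 0)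
        = 1 := by
      have e : ∀ x : Fin F, (if (∃ y, P y j = some s) ∧ P x j ≠ none ∧ P x j ≠ some s
          then 1 else 0) = if x = o then (1:ℕ) else 0 := by
        intro x
        by_cases h : x = o
        · rw [if_pos ((key x).mpr h), if_pos h]
        · rw [if_neg (fun hc => h ((key x).mp hc)), if_neg h]
      rw [Finset.sum_congr rfl (fun x _ => e x)]
      rw [Finset.sum_ite_eq' univ o (fun _ => 1)]
      simp
    rw [h1, h2]
  · have h1 : (∑ x, if P x j = some s then 1 else 0) = 0 := by
      apply Finset.sum_eq_zero
      intro x _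
      rw [if_neg (fun h => hex ⟨x, h⟩)]
    have h2 : (∑ x : Fin F, if (∃ y, P y j = some s) ∧ P x j ≠ none ∧ P x j ≠ some s
        then 1 else 0) = 0 := by
      apply Finset.sum_eq_zero
      intro x _
      rw [if_neg (fun h => hex h.1)]
    rw [h1, h2]



lemma pda_upper {F m K S : ℕ} (hF : 4 ≤ F) (hm : 1 ≤ m) (hS : S = m * F + F - 1)
    {P : Fin F → Fin K → Option (Fin S)} (hpda : IsPDA K F (F - 2) S P) :
    2 * K ≤ (S - 1) * (F - 1) := by
  classical
  obtain ⟨hP1, hP2, hP3, hP4⟩ := hpda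
  have hcs : ColS P := colS_of (by omega) hP4
  by_contra hcon
  push_neg at hcon
  set g : Fin S → ℕ := fun s => ∑ x, pdaOut P s x with hg
  -- total number of filled cells is 2K
  have hcol2 : ∀ j : Fin K, (univ.filter fun i => ¬ (P i j = none)).card = 2 := by
    intro j
    have h := Finset.card_filter_add_card_filter_not
      (s := (univ : Finset (Fin F))) (p := fun i => P i j = none)
    rw [hP4 j, Finset.card_univ, Fintype.card_fin] at h
    omega
  have htotal : ∑ s, g s = 2 * K := by
    calc ∑ s, g s = ∑ s, ∑ x, pdaOut P s x := rfl
      _ = ∑ x, ∑ s, pdaOut P s x := Finset.sum_comm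
      _ = ∑ x : Fin F, (univ.filter fun j => P x j ≠ none).card :=
          Finset.sum_congr rfl (fun x _ => sum_out_row x)
      _ = ∑ x : Fin F, ∑ j : Fin K, (if P x j ≠ none then 1 else 0) := by
          simp [Finset.card_filter]
      _ = ∑ j : Fin K, ∑ x : Fin F, (if P x j ≠ none then 1 else 0) := Finset.sum_comm
      _ = ∑ j : Fin K, (univ.filter fun i => ¬ (P i j = none)).card := by
          simp [Finset.card_filter]
      _ = ∑ j : Fin K, 2 := Finset.sum_congr rfl (fun j _ => hcol2 j)
      _ = 2 * K := by simp [mul_comm]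
  -- each symbol appears at most F-1 times
  have hgle : ∀ s, g s ≤ F - 1 := by
    intro s
    have hle : g s ≤ F := by
      calc g s ≤ ∑ _x : Fin F, 1 :=
            Finset.sum_le_sum (fun x _ => pdaOut_le_one hP1 s x)
        _ = F := by simp
    have hne : g s ≠ F := by
      intro hgF
      have hall : ∀ x, pdaOut P s x = 1 := by
        by_contra hnall
        push_neg at hnall
        obtain ⟨x0, hx0⟩ := hnall
        have hlt : pdaOut P s x0 < 1 := lt_of_le_of_ne (pdaOut_le_one hP1 s x0) hx0
        have hstrict := Finset.sum_lt_sum (f := fun x => pdaOut P s x) (g := fun _ => 1)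
          (fun i _ => pdaOut_le_one hP1 s i) ⟨x0, Finset.mem_univ x0, hlt⟩
        simp only [Finset.sum_const, Finset.card_univ, Fintype.card_fin, smul_eq_mul,
          mul_one] at hstrict
        have : g s < F := hstrict
        omega
      have hinn : ∑ x, pdaInn P s x = F := by
        rw [← sum_out_col hP2 hcs s]
        exact hgF
      have hpos : ∃ x, 1 ≤ pdaInn P s x := by
        by_contra hno
        push_neg at hno
        have : ∑ x, pdaInn P s x = 0 :=
          Finset.sum_eq_zero (fun x _ => by have := hno x; omega)
        omega
      obtain ⟨x, hx⟩ := hpos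
      have h0 := pdaOut_eq_zero hP3 hx
      have h1 := hall x
      omega
    omega
  -- full symbols and centers
  set fullS := univ.filter (fun s : Fin S => g s = F - 1) with hfull
  set nonfullS := univ.filter (fun s : Fin S => ¬ (g s = F - 1)) with hnonfull
  set C := fullS.card with hCdef
  set n := nonfullS.card with hndef
  have hCn : C + n = S := by
    rw [hCdef, hndef, hfull, hnonfull, Finset.card_filter_add_card_filter_not]
    simp
  -- n ≤ F - 2
  have hfullsum : ∑ s ∈ fullS, g s = C * (F - 1) := by
    rw [Finset.sum_congr rfl (fun s hs => (Finset.mem_filter.mp hs).2), Finset.sum_const,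
      smul_eq_mul]
  have hnonfullsum : ∑ s ∈ nonfullS, g s ≤ n * (F - 2) := by
    calc ∑ s ∈ nonfullS, g s ≤ ∑ _s ∈ nonfullS, (F - 2) := by
          apply Finset.sum_le_sum
          intro s hs
          have h1 := hgle s
          have h2 := (Finset.mem_filter.mp hs).2
          omega
      _ = n * (F - 2) := by rw [Finset.sum_const, smul_eq_mul]
  have hsplitg : ∑ s ∈ fullS, g s + ∑ s ∈ nonfullS, g s = 2 * K := by
    rw [hfull, hnonfull, Finset.sum_filter_add_sum_filter_not, htotal]
  have hSpos : 1 ≤ S := by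
    have : 4 ≤ m * F := le_trans hF (Nat.le_mul_of_pos_left F hm)
    omega
  have hbridge : (S - 1) * (F - 1) + (F - 1) = S * (F - 1) := by
    have h1 : S * (F - 1) = (S - 1) * (F - 1) + 1 * (F - 1) := by
      rw [← add_mul]
      congr 1
      omega
    omega
  have hCsum : C * (F - 1) + n * (F - 1) = S * (F - 1) := by
    rw [← add_mul, hCn]
  have hnsub : n * (F - 1) = n * (F - 2) + n := by
    have : F - 1 = (F - 2) + 1 := by omega
    rw [this, mul_add, mul_one]
  have hnF : n ≤ F - 2 := by omega
  -- center of a full symbol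
  have hzero : ∀ s : Fin S, g s = F - 1 →
      (univ.filter fun x => pdaOut P s x = 0).card = 1 := by
    intro s hs
    have hsplit := Finset.card_filter_add_card_filter_not
      (s := (univ : Finset (Fin F))) (p := fun x => pdaOut P s x = 0)
    have hsum : g s = (univ.filter fun x => ¬ (pdaOut P s x = 0)).card := by
      rw [Finset.card_filter]
      apply Finset.sum_congr rfl
      intro x _
      have hle := pdaOut_le_one hP1 s x
      by_cases h : pdaOut P s x = 0
      · rw [if_neg (not_not_intro h), h]
      · have h1 : pdaOut P s x = 1 := by omega
        rw [if_pos h, h1]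
    rw [Finset.card_univ, Fintype.card_fin] at hsplit
    omega
  have hexcen : ∀ s : Fin S, ∃ x : Fin F, g s = F - 1 →
      (univ.filter fun x' => pdaOut P s x' = 0) = {x} := by
    intro s
    by_cases hs : g s = F - 1
    · obtain ⟨x, hx⟩ := Finset.card_eq_one.mp (hzero s hs)
      exact ⟨x, fun _ => hx⟩
    · exact ⟨⟨0, by omega⟩, fun h => absurd h hs⟩
  choose cen hcen using hexcen
  have hout_cen : ∀ s, g s = F - 1 → pdaOut P s (cen s) = 0 := by
    intro s hs
    have : cen s ∈ univ.filter fun x' => pdaOut P s x' = 0 := by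
      rw [hcen s hs]; simp
    simpa using (Finset.mem_filter.mp this).2
  have hout_ne : ∀ s, g s = F - 1 → ∀ x, x ≠ cen s → pdaOut P s x = 1 := by
    intro s hs x hx
    have hnot : x ∉ univ.filter fun x' => pdaOut P s x' = 0 := by
      rw [hcen s hs]; simp [hx]
    have h0 : ¬ (pdaOut P s x = 0) := fun h => hnot (by simp [h])
    have := pdaOut_le_one hP1 s x
    omega
  have hinn_ne : ∀ s, g s = F - 1 → ∀ x, x ≠ cen s → pdaInn P s x = 0 := by
    intro s hs x hx
    by_contra h
    have h1 : 1 ≤ pdaInn P s x := by omega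
    have h2 := pdaOut_eq_zero hP3 h1
    have h3 := hout_ne s hs x hx
    omega
  have hinn_cen : ∀ s, g s = F - 1 → pdaInn P s (cen s) = F - 1 := by
    intro s hs
    have hsum : ∑ x, pdaInn P s x = F - 1 := by
      rw [← sum_out_col hP2 hcs s]
      exact hs
    have hsingle := Finset.sum_eq_single_of_mem (s := (univ : Finset (Fin F)))
      (f := fun x => pdaInn P s x) (cen s) (Finset.mem_univ _)
      (fun x _ hx => hinn_ne s hs x hx)
    rw [hsingle] at hsum
    exact hsum
  set c : Fin F → ℕ := fun x => (fullS.filter fun s => cen s = x).card with hc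
  -- per-row identities over ℤ
  have hrowzero : ∀ x : Fin F, ∑ s, ((pdaOut P s x : ℤ) - pdaInn P s x) = 0 := by
    intro x
    rw [Finset.sum_sub_distrib]
    have h1 := sum_out_row (P := P) x
    have h2 := sum_inn_row hP2 hcs x
    have h3 : ∑ s, pdaOut P s x = ∑ s, pdaInn P s x := by rw [h1, h2]
    rw [← Nat.cast_sum, ← Nat.cast_sum, h3, sub_self]
  have hcleC : ∀ x, c x ≤ C := fun x => Finset.card_filter_le _ _
  have hfull_sum : ∀ x : Fin F, ∑ s ∈ fullS, ((pdaOut P s x : ℤ) - pdaInn P s x)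
      = (C : ℤ) - F * c x := by
    intro x
    rw [← Finset.sum_filter_add_sum_filter_not fullS (fun s => cen s = x)]
    have e1 : ∑ s ∈ fullS.filter (fun s => cen s = x), ((pdaOut P s x : ℤ) - pdaInn P s x)
        = (c x : ℤ) * (1 - F) := by
      rw [Finset.sum_congr rfl (fun s hs => ?_), Finset.sum_const, nsmul_eq_mul]
      obtain ⟨hsf, hcenx⟩ := Finset.mem_filter.mp hs
      have hgs : g s = F - 1 := (Finset.mem_filter.mp hsf).2
      rw [← hcenx, hout_cen s hgs, hinn_cen s hgs]
      push_cast [Nat.cast_sub (by omega : 1 ≤ F)]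
      ring
    have e2 : ∑ s ∈ fullS.filter (fun s => ¬ (cen s = x)), ((pdaOut P s x : ℤ) - pdaInn P s x)
        = ((C : ℤ) - c x) * 1 := by
      rw [Finset.sum_congr rfl (fun s hs => ?_), Finset.sum_const, nsmul_eq_mul]
      · congr 1
        have hsplit := Finset.card_filter_add_card_filter_not
          (s := fullS) (p := fun s => cen s = x)
        have hrfl : c x = (fullS.filter fun s => cen s = x).card := rfl
        have hcx := hcleC x
        push_cast
        omega
      · obtain ⟨hsf, hcenx⟩ := Finset.mem_filter.mp hs
        have hgs : g s = F - 1 := (Finset.mem_filter.mp hsf).2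
        rw [hout_ne s hgs x (fun h => hcenx h.symm), hinn_ne s hgs x (fun h => hcenx h.symm)]
        norm_num
    rw [e1, e2]
    ring
  have hnonfull_eq : ∀ x : Fin F, ∑ s ∈ nonfullS, ((pdaOut P s x : ℤ) - pdaInn P s x)
      = (F : ℤ) * c x - C := by
    intro x
    have hsplit : ∑ s ∈ fullS, ((pdaOut P s x : ℤ) - pdaInn P s x)
        + ∑ s ∈ nonfullS, ((pdaOut P s x : ℤ) - pdaInn P s x) = 0 := by
      rw [hfull, hnonfull, Finset.sum_filter_add_sum_filter_not]
      exact hrowzero x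
    have := hfull_sum x
    linarith
  have hbound : ∀ x : Fin F, (F : ℤ) * c x - C ≤ n := by
    intro x
    rw [← hnonfull_eq x]
    calc ∑ s ∈ nonfullS, ((pdaOut P s x : ℤ) - pdaInn P s x)
        ≤ ∑ _s ∈ nonfullS, (1 : ℤ) := by
          apply Finset.sum_le_sum
          intro s _
          have h1 := pdaOut_le_one hP1 s x
          have h2 : (0 : ℤ) ≤ pdaInn P s x := by exact_mod_cast Nat.zero_le _
          have h1' : (pdaOut P s x : ℤ) ≤ 1 := by exact_mod_cast h1
          linarith
      _ = n := by rw [Finset.sum_const, nsmul_eq_mul, mul_one]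
  have hsumzero : ∑ x : Fin F, ((F : ℤ) * c x - C) = 0 := by
    have : ∑ x : Fin F, ∑ s ∈ nonfullS, ((pdaOut P s x : ℤ) - pdaInn P s x) = 0 := by
      rw [Finset.sum_comm]
      apply Finset.sum_eq_zero
      intro s _
      rw [Finset.sum_sub_distrib]
      have h := sum_out_col hP2 hcs s
      rw [← Nat.cast_sum, ← Nat.cast_sum, h, sub_self]
    rw [← this]
    exact Finset.sum_congr rfl (fun x _ => (hnonfull_eq x).symm)
  -- final contradiction
  have hSz : (S : ℤ) = m * F + F - 1 := by
    have h1 : 1 ≤ m * F + F := by omega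
    rw [hS]
    push_cast [Nat.cast_sub h1]
    ring
  have hCz : (C : ℤ) + n = S := by exact_mod_cast hCn
  have hcm : ∀ x : Fin F, (c x : ℤ) ≤ m := by
    intro x
    by_contra hx
    push_neg at hx
    have h1 : (m : ℤ) + 1 ≤ c x := by exact_mod_cast hx
    have h2 : (F : ℤ) * (m + 1) ≤ F * c x :=
      mul_le_mul_of_nonneg_left h1 (by positivity)
    have h3 := hbound x
    linarith
  have hterm : ∀ x : Fin F, (F : ℤ) * c x - C ≤ (n : ℤ) + 1 - F := by
    intro x
    have h1 : (F : ℤ) * c x ≤ F * m := mul_le_mul_of_nonneg_left (hcm x) (by positivity)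
    have : (F : ℤ) * m - C = n + 1 - F := by linarith [hSz, hCz]
    linarith
  have hfinal : (0 : ℤ) ≤ F * ((n : ℤ) + 1 - F) := by
    rw [← hsumzero]
    calc ∑ x : Fin F, ((F : ℤ) * c x - C) ≤ ∑ _x : Fin F, ((n : ℤ) + 1 - F) :=
          Finset.sum_le_sum (fun x _ => hterm x)
      _ = F * ((n : ℤ) + 1 - F) := by
          rw [Finset.sum_const, Finset.card_univ, Fintype.card_fin, nsmul_eq_mul]
  have hneg : ((n : ℤ) + 1 - F) ≤ -1 := by
    have h1 := hnF
    have h2 : 2 ≤ F := by omega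
    omega
  have : (F : ℤ) * ((n : ℤ) + 1 - F) ≤ F * (-1) :=
    mul_le_mul_of_nonneg_left hneg (by positivity)
  have hFpos : (0 : ℤ) < F := by exact_mod_cast (by omega : 0 < F)
  linarith

end Upper



theorem pda_optimal_S_eq_mF_add_F_sub_one (F m : ℕ) (hF : 4 ≤ F) (hm : 1 ≤ m) :
    IsGreatest {K : ℕ | PDAExists K F (F - 2) (m * F + F - 1)}
      ((m * F * (F - 1) + (F - 1) * (F - 2)) / 2) := by
  have hT2 : 2 * (m * F.choose 2 + (F - 1).choose 2)
      = m * F * (F - 1) + (F - 1) * (F - 2) := by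
    have h1 := two_mul_choose_two F
    have h2 := two_mul_choose_two (F - 1)
    have h3 : F - 1 - 1 = F - 2 := by omega
    rw [h3] at h2
    calc 2 * (m * F.choose 2 + (F - 1).choose 2)
        = m * (2 * F.choose 2) + 2 * (F - 1).choose 2 := by ring
      _ = m * (F * (F - 1)) + (F - 1) * (F - 2) := by rw [h1, h2]
      _ = m * F * (F - 1) + (F - 1) * (F - 2) := by ring
  have hTval : (m * F * (F - 1) + (F - 1) * (F - 2)) / 2
      = m * F.choose 2 + (F - 1).choose 2 := by
    rw [← hT2]
    exact Nat.mul_div_cancel_left _ (by norm_num)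
  constructor
  · show PDAExists _ F (F - 2) (m * F + F - 1)
    rw [hTval]
    have h := pda_exists_main F m hF
    have he : m * F + (F - 1) = m * F + F - 1 := by omega
    rw [he] at h
    exact h
  · intro K hK
    obtain ⟨P, hP⟩ := hK
    have hup := pda_upper hF hm rfl hP
    have hS1 : (m * F + F - 1) - 1 = m * F + F - 2 := by
      have : 4 ≤ m * F := le_trans hF (Nat.le_mul_of_pos_left F hm)
      omega
    have heq : (m * F + F - 2) * (F - 1) = m * F * (F - 1) + (F - 1) * (F - 2) := by
      have he2 : m * F + F - 2 = m * F + (F - 2) := by omega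
      rw [he2, add_mul, mul_comm (F - 2) (F - 1)]
    rw [hS1, heq, ← hT2] at hup
    rw [hTval]
    exact Nat.le_of_mul_le_mul_left hup (by norm_num)
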